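/- Let M be a complete Riemannian manifold, y ∈ M, and d_y²/2 the halved squared distance function to y. Then for every x ∈ M and v ∈ T_x M, the one-sided upper Dini directional derivative satisfies d⁺(½ d_y²)_x(v) ≤ inf { -⟨v, w⟩ : w ∈ exp_x⁻¹(y), |w| = d(x,y) }. -/

import Mathlib

/-- Abstract data of a (complete) Riemannian manifold `M` with tangent spaces `T x` and
Riemannian exponential maps `exp x : T x → M`; see `stmt_11.lean`. -/
structure RiemannianExpStruct (M : Type*) [MetricSpace M] (T : M → Type*)
    [∀ x, NormedAddCommGroup (T x)] [∀ x, InnerProductSpace ℝ (T x)] where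
  exp : ∀ x : M, T x → M
  exp_zero : ∀ x, exp x 0 = x
  exp_locIso : ∀ x : M, ∀ ε > (0:ℝ), ∃ r > (0:ℝ), ∀ u v : T x, ‖u‖ < r → ‖v‖ < r →
    dist (exp x u) (exp x v) ≤ (1 + ε) * ‖u - v‖
      ∧ (1 - ε) * ‖u - v‖ ≤ dist (exp x u) (exp x v)
  exp_ray_dist : ∀ (x : M) (w : T x), ‖w‖ = dist x (exp x w) →
    ∀ s t : ℝ, s ∈ Set.Icc (0:ℝ) 1 → t ∈ Set.Icc (0:ℝ) 1 →
      dist (exp x (s • w)) (exp x (t • w)) = |s - t| * ‖w‖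

/-- Auxiliary: for any `δ > 0` one can choose `α ≥ 1` and `ε > 0` making the
first-order coefficient close to `-⟪v, w⟫`. -/
lemma stmt13_choose {V : Type*} [NormedAddCommGroup V] [InnerProductSpace ℝ V]
    (v w : V) (δ : ℝ) (hδ : 0 < δ) :
    ∃ α ≥ (1:ℝ), ∃ ε > (0:ℝ),
      ((1 + ε) * ‖v - α • w‖ - α * ‖w‖) * ‖w‖ ≤ -(inner ℝ v w : ℝ) + δ / 2 := by
  set c : ℝ := inner ℝ v w with hc
  by_cases hw : w = 0
  · refine ⟨1, le_refl _, 1, one_pos, ?_⟩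
    simp [hw, hc, inner_zero_right]
    positivity
  · set n : ℝ := ‖w‖ with hn
    have hn0 : 0 < n := norm_pos_iff.mpr hw
    -- the function φ tends to -c as α → ∞
    have hφ : Filter.Tendsto
        (fun α : ℝ => (‖v‖ ^ 2 * α⁻¹ - 2 * c) / (‖α⁻¹ • v - w‖ + n) * n)
        Filter.atTop (nhds (-c)) := by
      have h1 : Filter.Tendsto (fun α : ℝ => ‖v‖ ^ 2 * α⁻¹ - 2 * c)
          Filter.atTop (nhds (-2 * c)) := by
        have := (tendsto_inv_atTop_zero.const_mul (‖v‖ ^ 2)).sub_const (2 * c)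
        simpa using this
      have h2 : Filter.Tendsto (fun α : ℝ => ‖α⁻¹ • v - w‖ + n)
          Filter.atTop (nhds (n + n)) := by
        have h0 : Filter.Tendsto (fun α : ℝ => α⁻¹) Filter.atTop (nhds (0 : ℝ)) :=
          tendsto_inv_atTop_zero
        have hsm : Filter.Tendsto (fun α : ℝ => α⁻¹ • v) Filter.atTop (nhds (0 : V)) := by
          simpa using h0.smul_const v
        have := ((hsm.sub_const w).norm).add_const n
        simpa [hn] using this
      have h2n : n + n ≠ 0 := by positivity
      have := (h1.div h2 h2n).mul_const n
      have hval : (-2 * c) / (n + n) * n = -c := by field_simp; ring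
      rwa [hval] at this
    have hev : ∀ᶠ α : ℝ in Filter.atTop,
        (fun α : ℝ => (‖v‖ ^ 2 * α⁻¹ - 2 * c) / (‖α⁻¹ • v - w‖ + n) * n) α < -c + δ / 4 :=
      hφ.eventually_lt_const (by linarith)
    obtain ⟨α, hα1, hαlt⟩ := (Filter.eventually_ge_atTop (1 : ℝ)).and hev |>.exists
    -- identity: (‖v - α•w‖ - α n) n = φ α
    have hα0 : (0 : ℝ) < α := lt_of_lt_of_le one_pos hα1
    set a : ℝ := ‖v - α • w‖ with ha
    have ha2 : a ^ 2 = ‖v‖ ^ 2 - 2 * α * c + α ^ 2 * n ^ 2 := by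
      rw [ha, hn, hc, norm_sub_sq_real, real_inner_smul_right, norm_smul,
        Real.norm_eq_abs, abs_of_pos hα0]
      ring
    have hainv : ‖α⁻¹ • v - w‖ = α⁻¹ * a := by
      have : α⁻¹ • v - w = α⁻¹ • (v - α • w) := by
        rw [smul_sub, smul_smul, inv_mul_cancel₀ hα0.ne', one_smul]
      rw [this, norm_smul, Real.norm_of_nonneg (inv_nonneg.mpr hα0.le), ha]
    have ha0 : 0 ≤ a := norm_nonneg _
    have hden : 0 < α⁻¹ * a + n := by positivity
    have hden2 : 0 < a + α * n := by positivity
    have hid1 : a - α * n = (‖v‖ ^ 2 - 2 * α * c) / (a + α * n) := by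
      rw [eq_div_iff hden2.ne']; linear_combination ha2
    have hid2 : (‖v‖ ^ 2 - 2 * α * c) / (a + α * n)
        = (‖v‖ ^ 2 * α⁻¹ - 2 * c) / (α⁻¹ * a + n) := by
      rw [div_eq_div_iff hden2.ne' hden.ne']
      field_simp
    have hαlt2 : (‖v‖ ^ 2 * α⁻¹ - 2 * c) / (α⁻¹ * a + n) * n < -c + δ / 4 := by
      simpa [hainv] using hαlt
    have hmain : (a - α * n) * n < -c + δ / 4 := by
      rw [hid1, hid2]; exact hαlt2
    -- now choose ε
    refine ⟨α, hα1, δ / (4 * (a * n + 1)), by positivity, ?_⟩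
    have han : 0 ≤ a * n := by positivity
    have hεan : δ / (4 * (a * n + 1)) * (a * n) ≤ δ / 4 := by
      rw [div_mul_eq_mul_div, div_le_div_iff₀ (by positivity) (by norm_num)]
      nlinarith
    have : ((1 + δ / (4 * (a * n + 1))) * a - α * n) * n
        = (a - α * n) * n + δ / (4 * (a * n + 1)) * (a * n) := by ring
    rw [← ha, this]
    linarith

set_option maxHeartbeats 1000000 in
/-- For every `x ∈ M`, `v ∈ T_x M` and every initial velocity `w` of a minimizing
geodesic from `x` to `y` (i.e. `exp_x w = y` and `|w| = d(x,y)`), the one-sided upper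
Dini directional derivative of `½ d_y²` satisfies
`d⁺(½ d_y²)_x(v) ≤ -⟨v, w⟩`; that is, it is bounded by the infimum over all such `w`. -/
theorem stmt13 {M : Type*} [MetricSpace M] {T : M → Type*}
    [∀ x, NormedAddCommGroup (T x)] [∀ x, InnerProductSpace ℝ (T x)]
    (R : RiemannianExpStruct M T) (x y : M) (v : T x) :
    ∀ w : T x, R.exp x w = y → ‖w‖ = dist x y →
      Filter.limsup
        (fun s => (dist (R.exp x (s • v)) y ^ 2 / 2 - dist x y ^ 2 / 2) / s)
        (nhdsWithin (0:ℝ) (Set.Ioi 0)) ≤ -(inner ℝ v w : ℝ) := by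
  intro w hexp hnorm
  set c : ℝ := inner ℝ v w with hc
  set f : ℝ → ℝ := fun s => (dist (R.exp x (s • v)) y ^ 2 / 2 - dist x y ^ 2 / 2) / s with hf
  -- eventual lower bound (for coboundedness)
  obtain ⟨r₁, hr₁, hiso₁⟩ := R.exp_locIso x 1 one_pos
  have hlb : ∀ᶠ s in nhdsWithin (0:ℝ) (Set.Ioi 0), -(2 * ‖v‖ * dist x y) ≤ f s := by
    have hmem : Set.Ioo (0:ℝ) (r₁ / (‖v‖ + 1)) ∈ nhdsWithin (0:ℝ) (Set.Ioi 0) :=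
      Ioo_mem_nhdsGT_of_mem ⟨le_refl 0, by positivity⟩
    filter_upwards [hmem] with s hs
    obtain ⟨hs0, hsr⟩ := hs
    have hsv : ‖s • v‖ < r₁ := by
      rw [norm_smul, Real.norm_of_nonneg hs0.le]
      calc s * ‖v‖ ≤ s * (‖v‖ + 1) := by nlinarith
        _ < r₁ := (lt_div_iff₀ (by positivity)).mp hsr
    have h0r : ‖(0 : T x)‖ < r₁ := by simpa using hr₁
    have hd := (hiso₁ (0 : T x) (s • v) h0r hsv).1
    rw [R.exp_zero x] at hd
    have hd' : dist x (R.exp x (s • v)) ≤ 2 * (s * ‖v‖) := by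
      have : ‖(0:T x) - s • v‖ = s * ‖v‖ := by
        rw [zero_sub, norm_neg, norm_smul, Real.norm_of_nonneg hs0.le]
      rw [this] at hd; linarith
    have htri : dist x y - 2 * (s * ‖v‖) ≤ dist (R.exp x (s • v)) y := by
      have := dist_triangle x (R.exp x (s • v)) y
      have h2 := dist_comm x (R.exp x (s • v))
      linarith [dist_triangle x (R.exp x (s • v)) y]
    have hdnn : (0:ℝ) ≤ dist (R.exp x (s • v)) y := dist_nonneg
    have hdxynn : (0:ℝ) ≤ dist x y := dist_nonneg
    have hsq : dist x y ^ 2 - 4 * (s * ‖v‖) * dist x y ≤ dist (R.exp x (s • v)) y ^ 2 := by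
      rcases le_or_gt (dist x y) (2 * (s * ‖v‖)) with h | h
      · nlinarith [sq_nonneg (dist (R.exp x (s • v)) y)]
      · have h2 : (dist x y - 2 * (s * ‖v‖)) * (dist x y - 2 * (s * ‖v‖))
            ≤ dist (R.exp x (s • v)) y * dist (R.exp x (s • v)) y :=
          mul_le_mul htri htri (by linarith) hdnn
        nlinarith [h2, sq_nonneg (s * ‖v‖)]
    rw [hf]
    rw [le_div_iff₀ hs0]
    nlinarith
  have hcb : Filter.IsCoboundedUnder (· ≤ ·) (nhdsWithin (0:ℝ) (Set.Ioi 0)) f :=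
    Filter.isCoboundedUnder_le_of_eventually_le _ hlb
  -- main bound
  refine le_of_forall_pos_le_add ?_
  intro δ hδ
  obtain ⟨α, hα1, ε, hε, hkey⟩ := stmt13_choose v w δ hδ
  have hα0 : (0:ℝ) < α := lt_of_lt_of_le one_pos hα1
  obtain ⟨r, hr, hiso⟩ := R.exp_locIso x ε hε
  set A : ℝ := (1 + ε) * ‖v - α • w‖ - α * ‖w‖ with hA
  have hw' : ‖w‖ = dist x (R.exp x w) := by rw [hexp]; exact hnorm
  refine Filter.limsup_le_of_le hcb ?_
  have hs₀pos : (0:ℝ) < min (min α⁻¹ (r / (α * ‖w‖ + ‖v‖ + 1))) (δ / (A ^ 2 + 1)) := by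
    have h1 : (0:ℝ) < α⁻¹ := by positivity
    have h2 : (0:ℝ) < r / (α * ‖w‖ + ‖v‖ + 1) := by positivity
    have h3 : (0:ℝ) < δ / (A ^ 2 + 1) := by positivity
    simp [lt_min_iff, h1, h2, h3]
  have hmem : Set.Ioo (0:ℝ) (min (min α⁻¹ (r / (α * ‖w‖ + ‖v‖ + 1))) (δ / (A ^ 2 + 1)))
      ∈ nhdsWithin (0:ℝ) (Set.Ioi 0) :=
    Ioo_mem_nhdsGT_of_mem ⟨le_refl 0, hs₀pos⟩
  filter_upwards [hmem] with s hs
  obtain ⟨hs0, hsr⟩ := hs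
  have hsα : s ≤ α⁻¹ := le_of_lt (lt_of_lt_of_le hsr (le_trans (min_le_left _ _) (min_le_left _ _)))
  have hsr' : s < r / (α * ‖w‖ + ‖v‖ + 1) :=
    lt_of_lt_of_le hsr (le_trans (min_le_left _ _) (min_le_right _ _))
  have hsδ : s ≤ δ / (A ^ 2 + 1) := le_of_lt (lt_of_lt_of_le hsr (min_le_right _ _))
  have hαs1 : α * s ≤ 1 := by
    rw [← le_div_iff₀' hα0] at *
    simpa [one_div, div_eq_inv_mul] using hsα
  have hdenpos : (0:ℝ) < α * ‖w‖ + ‖v‖ + 1 := by positivity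
  have hsprod : s * (α * ‖w‖ + ‖v‖ + 1) < r := by
    rw [← lt_div_iff₀ hdenpos]; exact hsr'
  have hsv : ‖s • v‖ < r := by
    rw [norm_smul, Real.norm_of_nonneg hs0.le]
    nlinarith [norm_nonneg w, norm_nonneg v, mul_nonneg (mul_nonneg hα0.le hs0.le) (norm_nonneg w)]
  have hsw : ‖(α * s) • w‖ < r := by
    rw [norm_smul, Real.norm_of_nonneg (by positivity : (0:ℝ) ≤ α * s)]
    nlinarith [norm_nonneg w, norm_nonneg v, mul_nonneg hs0.le (norm_nonneg v)]
  -- distance from exp(s v) to exp(α s w)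
  have hd1 : dist (R.exp x (s • v)) (R.exp x ((α * s) • w)) ≤ (1 + ε) * (s * ‖v - α • w‖) := by
    have := (hiso (s • v) ((α * s) • w) hsv hsw).1
    have heq : ‖s • v - (α * s) • w‖ = s * ‖v - α • w‖ := by
      have : s • v - (α * s) • w = s • (v - α • w) := by
        rw [smul_sub, smul_smul, mul_comm s α]
      rw [this, norm_smul, Real.norm_of_nonneg hs0.le]
    rwa [heq] at this
  -- distance from exp(α s w) to y along the ray
  have hd2 : dist (R.exp x ((α * s) • w)) y = (1 - α * s) * ‖w‖ := by
    have hray := R.exp_ray_dist x w hw' (α * s) 1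
      ⟨by positivity, hαs1⟩ ⟨zero_le_one, le_refl 1⟩
    rw [one_smul, hexp] at hray
    rw [hray, abs_of_nonpos (by linarith : α * s - 1 ≤ 0)]
    ring_nf
  have heqA : (1 + ε) * (s * ‖v - α • w‖) + (1 - α * s) * ‖w‖ = ‖w‖ + s * A := by
    rw [hA]; ring
  have htri : dist (R.exp x (s • v)) y ≤ ‖w‖ + s * A := by
    have h := dist_triangle (R.exp x (s • v)) (R.exp x ((α * s) • w)) y
    rw [hd2] at h
    linarith [hd1, heqA]
  have hdnn : (0:ℝ) ≤ dist (R.exp x (s • v)) y := dist_nonneg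
  have hsq : dist (R.exp x (s • v)) y ^ 2 ≤ (‖w‖ + s * A) ^ 2 :=
    pow_le_pow_left₀ hdnn htri 2
  rw [hf]
  show (dist (R.exp x (s • v)) y ^ 2 / 2 - dist x y ^ 2 / 2) / s ≤ -c + δ
  rw [← hnorm, div_le_iff₀ hs0, hc]
  have hsA2 : s * A ^ 2 ≤ δ := by
    have h1 : s * (A ^ 2 + 1) ≤ δ := by
      have := (le_div_iff₀ (by positivity : (0:ℝ) < A ^ 2 + 1)).mp hsδ
      linarith [mul_le_mul_of_nonneg_right hsδ (by positivity : (0:ℝ) ≤ A ^ 2 + 1),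
        (div_mul_cancel₀ δ (by positivity : (A ^ 2 + 1 : ℝ) ≠ 0))]
    nlinarith [sq_nonneg A, hs0]
  have h2 := mul_le_mul_of_nonneg_left hkey hs0.le
  have h3 := mul_le_mul_of_nonneg_left hsA2 hs0.le
  have hexp2 : (‖w‖ + s * A) ^ 2 = ‖w‖ ^ 2 + 2 * (s * (A * ‖w‖)) + s * (s * A ^ 2) := by ring
  rw [hexp2] at hsq
  clear_value A c f
  linarith [hsq, h2, h3]
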